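/- Let f : ℝⁿ → ℝⁿ be continuously differentiable with Jacobian Df(x), let λ > 0, ε > 0, and let P be a real symmetric n×n matrix with inertia p such that Df(x)ᵀP + P·Df(x) ⪯ −2λP − εI for all x ∈ ℝⁿ. Let A ⊆ ℝⁿ be a compact set that is invariant under complete solutions: for every a ∈ A there exists a differentiable curve x : ℝ → ℝⁿ with x(0) = a, x′(t) = f(x(t)) for all t ∈ ℝ, and x(t) ∈ A for all t ∈ ℝ. Then any two distinct points of A are separated by the quadratic form of P: for all z₁, z₂ ∈ A with z₁ ≠ z₂, (z₁−z₂)ᵀP(z₁−z₂) < 0. -/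

import Mathlib

open Matrix

/-- `M ⪯ N` iff `N - M` is positive semidefinite. -/
def matLE {m : Type*} [Fintype m] (M N : Matrix m m ℝ) : Prop := (N - M).PosSemidef

/-- A real symmetric matrix has inertia `p`: exactly `p` negative eigenvalues,
`card m − p` positive eigenvalues, and no zero eigenvalues, counted with multiplicity
(as roots of the characteristic polynomial). -/
def hasInertia {m : Type*} [Fintype m] [DecidableEq m]
    (P : Matrix m m ℝ) (p : ℕ) : Prop :=
  Multiset.countP (fun μ : ℝ => μ < 0) P.charpoly.roots = p ∧
  Multiset.countP (fun μ : ℝ => 0 < μ) P.charpoly.roots = Fintype.card m - p ∧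
  (0 : ℝ) ∉ P.charpoly.roots

/-- Number of complex eigenvalues (with algebraic multiplicity) of a real matrix
with strictly positive real part. -/
noncomputable def posReCount {m : Type*} [Fintype m] [DecidableEq m]
    (A : Matrix m m ℝ) : ℕ :=
  Multiset.countP (fun μ : ℂ => 0 < μ.re) (A.map Complex.ofReal).charpoly.roots

/-- Number of complex eigenvalues (with algebraic multiplicity) of a real matrix
with strictly negative real part. -/
noncomputable def negReCount {m : Type*} [Fintype m] [DecidableEq m]
    (A : Matrix m m ℝ) : ℕ :=
  Multiset.countP (fun μ : ℂ => μ.re < 0) (A.map Complex.ofReal).charpoly.roots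

/-- The quadratic form `xᵀ P x`. -/
def quadForm {m : Type*} [Fintype m] (P : Matrix m m ℝ) (x : m → ℝ) : ℝ :=
  x ⬝ᵥ P.mulVec x

/-- Euclidean norm on `m → ℝ`. -/
noncomputable def enorm {m : Type*} [Fintype m] (x : m → ℝ) : ℝ :=
  Real.sqrt (x ⬝ᵥ x)

/-- `J` is the Jacobian of `f`. -/
def IsJacobianOf {n : ℕ} (J : (Fin n → ℝ) → Matrix (Fin n) (Fin n) ℝ)
    (f : (Fin n → ℝ) → (Fin n → ℝ)) : Prop :=
  ∀ x, HasFDerivAt f (LinearMap.toContinuousLinearMap ((J x).mulVecLin)) x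


section Aux
variable {n : ℕ}


lemma symm_dot (P : Matrix (Fin n) (Fin n) ℝ) (hP : P.IsSymm) (a b : Fin n → ℝ) :
    a ⬝ᵥ P.mulVec b = b ⬝ᵥ P.mulVec a := by
  rw [Matrix.dotProduct_mulVec, ← Matrix.mulVec_transpose, hP.eq, dotProduct_comm]

lemma const_dot_deriv {h : ℝ → Fin n → ℝ} {w : Fin n → ℝ} {t : ℝ}
    (c : Fin n → ℝ) (P : Matrix (Fin n) (Fin n) ℝ) (hh : HasDerivAt h w t) :
    HasDerivAt (fun s => c ⬝ᵥ P.mulVec (h s)) (c ⬝ᵥ P.mulVec w) t := by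
  have hcoord : ∀ i, HasDerivAt (fun s => h s i) (w i) t := hasDerivAt_pi.mp hh
  have : HasDerivAt (fun s => ∑ i, c i * ∑ j, P i j * h s j)
      (∑ i, c i * ∑ j, P i j * w j) t := by
    apply HasDerivAt.fun_sum
    intro i _
    exact (HasDerivAt.fun_sum (fun j _ => (hcoord j).const_mul (P i j))).const_mul (c i)
  simpa [dotProduct, Matrix.mulVec] using this

lemma key_bound (f : (Fin n → ℝ) → (Fin n → ℝ)) (J : (Fin n → ℝ) → Matrix (Fin n) (Fin n) ℝ)
    (hJ : IsJacobianOf J f) (P : Matrix (Fin n) (Fin n) ℝ) (hPsymm : P.IsSymm)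
    (lam eps : ℝ)
    (hLMI : ∀ x : Fin n → ℝ, (( -((2 * lam) • P) - eps • (1 : Matrix (Fin n) (Fin n) ℝ)) - ((J x)ᵀ * P + P * J x)).PosSemidef)
    (u v : Fin n → ℝ) :
    (u - v) ⬝ᵥ P.mulVec (f u - f v)
      ≤ -lam * ((u - v) ⬝ᵥ P.mulVec (u - v)) - (eps/2) * ((u - v) ⬝ᵥ (u - v)) := by
  set e : Fin n → ℝ := u - v with he
  set g : ℝ → Fin n → ℝ := fun s => v + s • e with hg
  have hgderiv : ∀ s : ℝ, HasDerivAt g e s := by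
    intro s
    rw [hasDerivAt_pi]
    intro i
    simpa [hg] using ((hasDerivAt_mul_const (e i)).const_add (v i))
  have hfg : ∀ s : ℝ, HasDerivAt (fun s => f (g s)) ((J (g s)).mulVec e) s := by
    intro s
    simpa [Function.comp_def] using (hJ (g s)).comp_hasDerivAt s (hgderiv s)
  set φ : ℝ → ℝ := fun s => e ⬝ᵥ P.mulVec (f (g s)) with hφ
  have hφderiv : ∀ s : ℝ, HasDerivAt φ (e ⬝ᵥ P.mulVec ((J (g s)).mulVec e)) s :=
    fun s => const_dot_deriv e P (hfg s)
  obtain ⟨c, _, hc⟩ := exists_hasDerivAt_eq_slope φ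
    (fun s => e ⬝ᵥ P.mulVec ((J (g s)).mulVec e)) one_pos
    (fun s _ => (hφderiv s).continuousAt.continuousWithinAt)
    (fun s _ => hφderiv s)
  have hg1 : g 1 = u := by simp [hg, he]
  have hg0 : g 0 = v := by simp [hg]
  have hslope : e ⬝ᵥ P.mulVec (f u - f v) = e ⬝ᵥ P.mulVec ((J (g c)).mulVec e) := by
    rw [hc]
    simp [hφ, hg1, hg0, Matrix.mulVec_sub, dotProduct_sub]
  have hpsd := (hLMI (g c)).dotProduct_mulVec_nonneg e
  rw [star_trivial] at hpsd
  set N : Matrix (Fin n) (Fin n) ℝ := -((2 * lam) • P) - eps • (1 : Matrix (Fin n) (Fin n) ℝ) with hN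
  set M : Matrix (Fin n) (Fin n) ℝ := (J (g c))ᵀ * P + P * J (g c) with hM
  rw [Matrix.sub_mulVec, dotProduct_sub] at hpsd
  have hineq : e ⬝ᵥ M.mulVec e ≤ e ⬝ᵥ N.mulVec e := by linarith
  have expand : e ⬝ᵥ M.mulVec e = 2 * (e ⬝ᵥ P.mulVec ((J (g c)).mulVec e)) := by
    rw [hM, Matrix.add_mulVec, dotProduct_add]
    have h1 : ((J (g c))ᵀ * P) = (P * J (g c))ᵀ := by
      rw [Matrix.transpose_mul, hPsymm.eq]
    rw [h1, Matrix.mulVec_transpose, dotProduct_comm, ← Matrix.dotProduct_mulVec, ← Matrix.mulVec_mulVec]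
    ring
  have expandR : e ⬝ᵥ N.mulVec e = -(2*lam) * (e ⬝ᵥ P.mulVec e) - eps * (e ⬝ᵥ e) := by
    rw [hN, Matrix.sub_mulVec, dotProduct_sub, Matrix.neg_mulVec,
      dotProduct_neg, Matrix.smul_mulVec, Matrix.smul_mulVec,
      Matrix.one_mulVec, dotProduct_smul, dotProduct_smul, smul_eq_mul,
      smul_eq_mul]
    ring
  rw [expand, expandR] at hineq
  rw [hslope]
  linarith


lemma dot_deriv {e : ℝ → Fin n → ℝ} {v : Fin n → ℝ} {t : ℝ}
    (P : Matrix (Fin n) (Fin n) ℝ) (he : HasDerivAt e v t) :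
    HasDerivAt (fun s => e s ⬝ᵥ P.mulVec (e s))
      (v ⬝ᵥ P.mulVec (e t) + e t ⬝ᵥ P.mulVec v) t := by
  have hcoord : ∀ i, HasDerivAt (fun s => e s i) (v i) t := hasDerivAt_pi.mp he
  have : HasDerivAt (fun s => ∑ i, e s i * ∑ j, P i j * e s j)
      (∑ i, (v i * ∑ j, P i j * e t j + e t i * ∑ j, P i j * v j)) t := by
    apply HasDerivAt.fun_sum
    intro i _
    exact (hcoord i).mul (HasDerivAt.fun_sum (fun j _ => (hcoord j).const_mul (P i j)))
  simpa [dotProduct, Matrix.mulVec, Finset.sum_add_distrib] using this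

lemma dot_self_nonneg (e : Fin n → ℝ) : 0 ≤ e ⬝ᵥ e :=
  Finset.sum_nonneg fun i _ => mul_self_nonneg _

lemma dot_self_pos {e : Fin n → ℝ} (he : e ≠ 0) : 0 < e ⬝ᵥ e := by
  rcases Function.ne_iff.mp he with ⟨i, hi⟩
  exact Finset.sum_pos' (fun j _ => mul_self_nonneg _)
    ⟨i, Finset.mem_univ i, mul_self_pos.mpr hi⟩

end Aux

/-- on a compact invariant set of a strictly p-dominant system (λ > 0),
any two distinct points are strictly separated by the quadratic form of P. -/
theorem compact_invariant_set_separated {n : ℕ}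
    (f : (Fin n → ℝ) → (Fin n → ℝ)) (J : (Fin n → ℝ) → Matrix (Fin n) (Fin n) ℝ)
    (hf : ContDiff ℝ 1 f) (hJ : IsJacobianOf J f)
    (P : Matrix (Fin n) (Fin n) ℝ) (p : ℕ)
    (hPsymm : P.IsSymm) (hPinertia : hasInertia P p)
    (lam eps : ℝ) (hlam : 0 < lam) (heps : 0 < eps)
    (hLMI : ∀ x : Fin n → ℝ, matLE ((J x)ᵀ * P + P * J x)
      (-((2 * lam) • P) - eps • (1 : Matrix (Fin n) (Fin n) ℝ)))
    (A : Set (Fin n → ℝ)) (hAcompact : IsCompact A)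
    (hAinv : ∀ a ∈ A, ∃ x : ℝ → Fin n → ℝ, x 0 = a ∧
      (∀ t : ℝ, HasDerivAt x (f (x t)) t) ∧ (∀ t : ℝ, x t ∈ A)) :
    ∀ z₁ ∈ A, ∀ z₂ ∈ A, z₁ ≠ z₂ → quadForm P (z₁ - z₂) < 0 := by
  intro z₁ hz₁ z₂ hz₂ hne
  obtain ⟨x, hx0, hx', hxA⟩ := hAinv z₁ hz₁
  obtain ⟨y, hy0, hy', hyA⟩ := hAinv z₂ hz₂
  set e : ℝ → Fin n → ℝ := fun t => x t - y t with hedef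
  have he' : ∀ t, HasDerivAt e (f (x t) - f (y t)) t := fun t => (hx' t).sub (hy' t)
  set V : ℝ → ℝ := fun t => e t ⬝ᵥ P.mulVec (e t) with hVdef
  have hLMI' : ∀ z : Fin n → ℝ,
      ((-((2 * lam) • P) - eps • (1 : Matrix (Fin n) (Fin n) ℝ)) - ((J z)ᵀ * P + P * J z)).PosSemidef :=
    fun z => hLMI z
  have hVderiv : ∀ t, HasDerivAt V
      ((f (x t) - f (y t)) ⬝ᵥ P.mulVec (e t) + e t ⬝ᵥ P.mulVec (f (x t) - f (y t))) t :=
    fun t => dot_deriv P (he' t)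
  have hDbound : ∀ t, (f (x t) - f (y t)) ⬝ᵥ P.mulVec (e t) + e t ⬝ᵥ P.mulVec (f (x t) - f (y t))
      ≤ -(2*lam) * V t - eps * (e t ⬝ᵥ e t) := by
    intro t
    have h1 := key_bound f J hJ P hPsymm lam eps hLMI' (x t) (y t)
    have h2 : (f (x t) - f (y t)) ⬝ᵥ P.mulVec (e t) = e t ⬝ᵥ P.mulVec (f (x t) - f (y t)) :=
      symm_dot P hPsymm _ _
    rw [h2]
    simp only [hVdef, hedef] at *
    linarith
  set W : ℝ → ℝ := fun t => Real.exp (2*lam*t) * V t with hWdef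
  have hWderiv : ∀ t, HasDerivAt W
      (Real.exp (2*lam*t) * (2*lam*1) * V t +
        Real.exp (2*lam*t) * ((f (x t) - f (y t)) ⬝ᵥ P.mulVec (e t) +
          e t ⬝ᵥ P.mulVec (f (x t) - f (y t)))) t := by
    intro t
    exact (((hasDerivAt_id t).const_mul (2*lam)).exp).mul (hVderiv t)
  have hWd_le : ∀ t, Real.exp (2*lam*t) * (2*lam*1) * V t +
      Real.exp (2*lam*t) * ((f (x t) - f (y t)) ⬝ᵥ P.mulVec (e t) +
        e t ⬝ᵥ P.mulVec (f (x t) - f (y t)))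
      ≤ -(eps * Real.exp (2*lam*t) * (e t ⬝ᵥ e t)) := by
    intro t
    have hexp : (0:ℝ) < Real.exp (2*lam*t) := Real.exp_pos _
    have := mul_le_mul_of_nonneg_left (hDbound t) hexp.le
    nlinarith [this]
  have hWanti : Antitone W := by
    apply antitone_of_deriv_nonpos
    · exact fun t => (hWderiv t).differentiableAt
    · intro t
      rw [(hWderiv t).deriv]
      exact le_trans (hWd_le t) (by
        have h := mul_nonneg (mul_nonneg heps.le (Real.exp_pos (2*lam*t)).le)
          (dot_self_nonneg (e t))
        linarith [h])
  -- find δ > 0 with e s ≠ 0 on [-δ, 0]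
  have he0 : e 0 ≠ 0 := by
    simp only [hedef, hx0, hy0]
    exact sub_ne_zero.mpr hne
  have hecont : Continuous e := by
    apply continuous_iff_continuousAt.mpr
    exact fun t => (he' t).continuousAt
  have hopen : IsOpen {t : ℝ | e t ≠ 0} := by
    have : {t : ℝ | e t ≠ 0} = e ⁻¹' {0}ᶜ := rfl
    rw [this]
    exact (isClosed_singleton.isOpen_compl).preimage hecont
  obtain ⟨δ, hδpos, hδ⟩ := Metric.isOpen_iff.mp hopen 0 he0
  have hmemball : ∀ s ∈ Set.Icc (-(δ/2)) 0, e s ≠ 0 := by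
    intro s hs
    apply hδ
    simp only [Metric.mem_ball, Real.dist_eq, sub_zero]
    rw [abs_lt]
    constructor <;> [linarith [hs.1]; linarith [hs.2, hδpos]]
  have hδ2 : -(δ/2) < 0 := by linarith
  have hstrict : StrictAntiOn W (Set.Icc (-(δ/2)) 0) := by
    apply strictAntiOn_of_deriv_neg (convex_Icc _ _)
    · exact fun t _ => (hWderiv t).continuousAt.continuousWithinAt
    · intro t ht
      rw [interior_Icc] at ht
      rw [(hWderiv t).deriv]
      apply lt_of_le_of_lt (hWd_le t)
      have hE : 0 < e t ⬝ᵥ e t := dot_self_pos (hmemball t ⟨ht.1.le, ht.2.le⟩)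
      have h := mul_pos (mul_pos heps (Real.exp_pos (2*lam*t))) hE
      linarith [h]
  have hW0lt : W 0 < W (-(δ/2)) :=
    hstrict ⟨le_refl _, hδ2.le⟩ ⟨hδ2.le, le_refl _⟩ hδ2
  -- bound V on A
  have hKc : IsCompact (A ×ˢ A) := hAcompact.prod hAcompact
  have hcontg : Continuous (fun p : (Fin n → ℝ) × (Fin n → ℝ) =>
      (p.1 - p.2) ⬝ᵥ P.mulVec (p.1 - p.2)) := by
    simp only [dotProduct, Matrix.mulVec]
    fun_prop
  obtain ⟨w, hw, hmax⟩ := hKc.exists_isMaxOn ⟨(z₁, z₁), ⟨hz₁, hz₁⟩⟩ hcontg.continuousOn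
  set C : ℝ := (w.1 - w.2) ⬝ᵥ P.mulVec (w.1 - w.2) with hCdef
  have hC : ∀ t, V t ≤ C := fun t => hmax (Set.mk_mem_prod (hxA t) (hyA t))
  -- limit
  have htend : Filter.Tendsto (fun t : ℝ => Real.exp (2*lam*(-t)) * C)
      Filter.atTop (nhds 0) := by
    have h1 : Filter.Tendsto (fun t : ℝ => 2*lam*(-t)) Filter.atTop Filter.atBot := by
      apply Filter.Tendsto.const_mul_atBot (by linarith : (0:ℝ) < 2*lam)
      exact Filter.tendsto_neg_atTop_atBot
    have h2 := Real.tendsto_exp_atBot.comp h1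
    simpa using h2.mul_const C
  have hWle : ∀ᶠ t in Filter.atTop, W (-(δ/2)) ≤ Real.exp (2*lam*(-t)) * C := by
    filter_upwards [Filter.eventually_ge_atTop (δ/2)] with t ht
    calc W (-(δ/2)) ≤ W (-t) := hWanti (by linarith)
    _ ≤ Real.exp (2*lam*(-t)) * C :=
        mul_le_mul_of_nonneg_left (hC (-t)) (Real.exp_pos _).le
  have hWneg : W (-(δ/2)) ≤ 0 := ge_of_tendsto htend hWle
  have hV0 : quadForm P (z₁ - z₂) = W 0 := by
    simp [hWdef, hVdef, hedef, hx0, hy0, quadForm]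
  rw [hV0]
  exact lt_of_lt_of_le hW0lt hWneg
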